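/- Let Λ be a set with a symmetric distance function d satisfying d(x,y) > 0 for x ≠ y, let X ⊆ Λ be finite, and let N : ℕ → ℕ be such that for every x ∈ X and every integer r ≥ 1 the set {y ∈ X : d(x,y) ≤ r} has at most N(r) elements. Let m ≥ 2 and suppose the series ∑_{r=1}^∞ N(r)^{m/2} e^{−r} converges (real exponent m/2). Then, with (q_n)_{n≥2} the sequence determined by q₂ = 1, q₃ = 2, q_{n+2} = (n+1)q_{n+1} + q_n, the following bound holds: ∑_{Y ⊆ X, |Y| = m} e^{−Δ(Y)} ≤ e · q_m · |X|^{m/2} · ∑_{r=1}^∞ N(r)^{m/2} e^{−r}. -/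

import Mathlib

open scoped BigOperators

/-- The distance `d(S,T) = min_{s∈S,t∈T} d(s,t)` between two (nonempty, finite) subsets,
realized as an infimum. -/
noncomputable def setDist {Λ : Type*} (d : Λ → Λ → ℝ) (S T : Finset Λ) : ℝ :=
  sInf {r : ℝ | ∃ s ∈ S, ∃ t ∈ T, r = d s t}

/-- The spread `Δ(Y) = max_{y∈Y} d(y, Y∖{y})`, realized as a supremum. -/
noncomputable def spread {Λ : Type*} [DecidableEq Λ] (d : Λ → Λ → ℝ) (Y : Finset Λ) : ℝ :=
  sSup {r : ℝ | ∃ y ∈ Y, r = setDist d {y} (Y.erase y)}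

/-- The 2-spread `Δ₂(Y) = max_{J ⊆ Y, |J| = 2} d(J, Y∖J)`. -/
noncomputable def spread2 {Λ : Type*} [DecidableEq Λ] (d : Λ → Λ → ℝ) (Y : Finset Λ) : ℝ :=
  sSup {r : ℝ | ∃ J : Finset Λ, J ⊆ Y ∧ J.card = 2 ∧ r = setDist d J (Y \ J)}

/-- `N(X,n,r)`: the number of `n`-element subsets `Y ⊆ X` with `Δ(Y) ≤ r`. -/
noncomputable def countSpread {Λ : Type*} [DecidableEq Λ] (d : Λ → Λ → ℝ)
    (X : Finset Λ) (n : ℕ) (r : ℝ) : ℕ :=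
  {Y : Finset Λ | Y ⊆ X ∧ Y.card = n ∧ spread d Y ≤ r}.ncard

/-- The sequence `q₂ = 1`, `q₃ = 2`, `q_{n+2} = (n+1)·q_{n+1} + q_n` (for `n ≥ 2`). -/
def qseq : ℕ → ℕ
  | 0 => 0
  | 1 => 0
  | 2 => 1
  | 3 => 2
  | (n + 4) => (n + 3) * qseq (n + 3) + qseq (n + 2)

set_option linter.unusedSectionVars false

section aux
open scoped Classical
variable {Λ : Type*} [DecidableEq Λ] (d : Λ → Λ → ℝ)


def good (r : ℝ) (Y : Finset Λ) : Prop := ∀ y ∈ Y, ∃ z ∈ Y, z ≠ y ∧ d y z ≤ r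

noncomputable def ballX (X : Finset Λ) (r : ℝ) (x : Λ) : Finset Λ :=
  X.filter (fun y => d x y ≤ r)

noncomputable def cntF (X : Finset Λ) (r : ℝ) (n : ℕ) : Finset (Finset Λ) :=
  X.powerset.filter (fun Y => Y.card = n ∧ good d r Y)

variable {d}

lemma mem_cntF {X : Finset Λ} {r : ℝ} {n : ℕ} {Y : Finset Λ} :
    Y ∈ cntF d X r n ↔ Y ⊆ X ∧ Y.card = n ∧ good d r Y := by
  simp [cntF, Finset.mem_filter, Finset.mem_powerset, and_assoc]

lemma qseq_rec (k : ℕ) : qseq (k + 3) = (k + 2) * qseq (k + 2) + qseq (k + 1) := by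
  cases k with
  | zero => decide
  | succ k => rfl

lemma step_mem (hsym : ∀ x y, d x y = d y x) {X : Finset Λ} {r : ℝ} {n : ℕ}
    {Y : Finset Λ} (hY : Y ∈ cntF d X r (n+3)) :
    Y ∈ (cntF d X r (n+2)).biUnion
          (fun Y' => Y'.biUnion (fun a => (ballX d X r a).image (fun y => insert y Y')))
      ∪ (cntF d X r (n+1)).biUnion
          (fun Y'' => X.biUnion (fun y => (ballX d X r y).image
            (fun z => insert z (insert y Y'')))) := by
  obtain ⟨hYX, hcard, hgood⟩ := mem_cntF.mp hY
  rw [Finset.mem_union]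
  by_cases hA : ∃ y ∈ Y, good d r (Y.erase y)
  · left
    obtain ⟨y, hy, hg⟩ := hA
    obtain ⟨z, hz, hzy, hdz⟩ := hgood y hy
    refine Finset.mem_biUnion.mpr ⟨Y.erase y, mem_cntF.mpr ⟨(Finset.erase_subset _ _).trans hYX,
      by rw [Finset.card_erase_of_mem hy, hcard]; omega, hg⟩, ?_⟩
    refine Finset.mem_biUnion.mpr ⟨z, Finset.mem_erase.mpr ⟨hzy, hz⟩, ?_⟩
    refine Finset.mem_image.mpr ⟨y, ?_, Finset.insert_erase hy⟩
    exact Finset.mem_filter.mpr ⟨hYX hy, by rw [hsym]; exact hdz⟩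
  · right
    push_neg at hA
    have key : ∀ y ∈ Y, ∃ w ∈ Y, w ≠ y ∧ d w y ≤ r ∧
        ∀ z ∈ Y, z ≠ w → d w z ≤ r → z = y := by
      intro y hy
      have h1 := hA y hy
      unfold good at h1
      push_neg at h1
      obtain ⟨w, hw, hwall⟩ := h1
      have hwY : w ∈ Y := Finset.mem_of_mem_erase hw
      have hwne : w ≠ y := Finset.ne_of_mem_erase hw
      obtain ⟨z, hz, hzw, hdz⟩ := hgood w hwY
      have hzy : z = y := by
        by_contra hne
        exact absurd hdz (not_le.mpr (hwall z (Finset.mem_erase.mpr ⟨hne, hz⟩) hzw))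
      refine ⟨w, hwY, hwne, hzy ▸ hdz, ?_⟩
      intro u hu hune hdu
      by_contra hne
      exact absurd hdu (not_le.mpr (hwall u (Finset.mem_erase.mpr ⟨hne, hu⟩) hune))
    have hYne : Y.Nonempty := Finset.card_pos.mp (by omega)
    obtain ⟨y₀, hy₀⟩ := hYne
    obtain ⟨w₀, hw₀Y, hw₀ne, hdw₀, huniq₀⟩ := key y₀ hy₀
    obtain ⟨w₁, hw₁Y, hw₁ne, hdw₁, huniq₁⟩ := key w₀ hw₀Y
    have hw₁eq : w₁ = y₀ := huniq₀ w₁ hw₁Y hw₁ne (by rw [hsym]; exact hdw₁)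
    rw [hw₁eq] at hdw₁ huniq₁
    -- now: hdw₁ : d y₀ w₀ ≤ r, huniq₁ : only mate of y₀ is w₀
    set Y'' := (Y.erase y₀).erase w₀ with hY''
    have hw₀e : w₀ ∈ Y.erase y₀ := Finset.mem_erase.mpr ⟨hw₀ne, hw₀Y⟩
    have hcard'' : Y''.card = n + 1 := by
      rw [hY'', Finset.card_erase_of_mem hw₀e, Finset.card_erase_of_mem hy₀, hcard]
      omega
    have hsub'' : Y'' ⊆ Y := (Finset.erase_subset _ _).trans (Finset.erase_subset _ _)
    have hgood'' : good d r Y'' := by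
      intro v hv
      have hvw₀ : v ≠ w₀ := Finset.ne_of_mem_erase hv
      have hv' : v ∈ Y.erase y₀ := Finset.mem_of_mem_erase hv
      have hvy₀ : v ≠ y₀ := Finset.ne_of_mem_erase hv'
      have hvY : v ∈ Y := Finset.mem_of_mem_erase hv'
      obtain ⟨z, hz, hzv, hdvz⟩ := hgood v hvY
      have hz1 : z ≠ y₀ := by
        rintro rfl
        exact hvw₀ (huniq₁ v hvY hvy₀ (by rw [hsym]; exact hdvz))
      have hz2 : z ≠ w₀ := by
        rintro rfl
        exact hvy₀ (huniq₀ v hvY hvw₀ (by rw [hsym]; exact hdvz))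
      exact ⟨z, Finset.mem_erase.mpr ⟨hz2, Finset.mem_erase.mpr ⟨hz1, hz⟩⟩, hzv, hdvz⟩
    refine Finset.mem_biUnion.mpr ⟨Y'', mem_cntF.mpr ⟨hsub''.trans hYX, hcard'', hgood''⟩, ?_⟩
    refine Finset.mem_biUnion.mpr ⟨y₀, hYX hy₀, ?_⟩
    refine Finset.mem_image.mpr ⟨w₀, Finset.mem_filter.mpr ⟨hYX hw₀Y, hdw₁⟩, ?_⟩
    rw [hY'', Finset.erase_right_comm, Finset.insert_erase
      (Finset.mem_erase.mpr ⟨Ne.symm hw₀ne, hy₀⟩), Finset.insert_erase hw₀Y]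



lemma distSet_eq (y : Λ) (T : Finset Λ) :
    {r : ℝ | ∃ s ∈ ({y} : Finset Λ), ∃ t ∈ T, r = d s t} = (fun t => d y t) '' ↑T := by
  ext r
  simp [eq_comm]

lemma setDist_singleton_le {y : Λ} {T : Finset Λ} (hT : T.Nonempty) {r : ℝ} :
    setDist d {y} T ≤ r ↔ ∃ t ∈ T, d y t ≤ r := by
  rw [setDist, distSet_eq]
  have hfin : ((fun t => d y t) '' ↑T).Finite := (T.finite_toSet).image _
  have hne : ((fun t => d y t) '' ↑T).Nonempty := (hT.to_set).image _
  constructor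
  · intro h
    obtain ⟨t, ht, h2⟩ := hne.csInf_mem hfin
    exact ⟨t, ht, by simpa [← h2] using h⟩
  · rintro ⟨t, ht, h⟩
    exact le_trans (csInf_le hfin.bddBelow ⟨t, ht, rfl⟩) h

lemma spreadSet_eq (Y : Finset Λ) :
    {r : ℝ | ∃ y ∈ Y, r = setDist d {y} (Y.erase y)}
      = (fun y => setDist d {y} (Y.erase y)) '' ↑Y := by
  ext r; simp [eq_comm]

lemma erase_nonempty_of_two_le {Y : Finset Λ} (hY : 2 ≤ Y.card) {y : Λ} (hy : y ∈ Y) :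
    (Y.erase y).Nonempty := by
  rw [← Finset.card_pos, Finset.card_erase_of_mem hy]; omega

lemma spread_le_iff {Y : Finset Λ} (hY : 2 ≤ Y.card) {r : ℝ} :
    spread d Y ≤ r ↔ good d r Y := by
  have hYne : Y.Nonempty := Finset.card_pos.mp (by omega)
  rw [spread, spreadSet_eq]
  have hfin : ((fun y => setDist d {y} (Y.erase y)) '' ↑Y).Finite := (Y.finite_toSet).image _
  have hne := (hYne.to_set).image (fun y => setDist d {y} (Y.erase y))
  constructor
  · intro h y hy
    have hmem : setDist d {y} (Y.erase y) ∈ (fun y => setDist d {y} (Y.erase y)) '' ↑Y :=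
      ⟨y, hy, rfl⟩
    have := le_trans (le_csSup hfin.bddAbove hmem) h
    obtain ⟨t, ht, h2⟩ := (setDist_singleton_le (erase_nonempty_of_two_le hY hy)).mp this
    exact ⟨t, Finset.mem_of_mem_erase ht, Finset.ne_of_mem_erase ht, h2⟩
  · intro h
    apply csSup_le hne
    rintro b ⟨y, hy, rfl⟩
    obtain ⟨z, hz, hzy, hdz⟩ := h y hy
    exact (setDist_singleton_le (erase_nonempty_of_two_le hY hy)).mpr
      ⟨z, Finset.mem_erase.mpr ⟨hzy, hz⟩, hdz⟩

lemma spread_pos {Y : Finset Λ} (hY : 2 ≤ Y.card)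
    (hpos : ∀ x y, x ≠ y → 0 < d x y) : 0 < spread d Y := by
  have hYne : Y.Nonempty := Finset.card_pos.mp (by omega)
  rw [spread, spreadSet_eq]
  have hfin : ((fun y => setDist d {y} (Y.erase y)) '' ↑Y).Finite := (Y.finite_toSet).image _
  have hne := (hYne.to_set).image (fun y => setDist d {y} (Y.erase y))
  obtain ⟨y, hy, h2⟩ := hne.csSup_mem hfin
  rw [← h2]
  show 0 < setDist d {y} (Y.erase y)
  rw [setDist, distSet_eq]
  have hT := erase_nonempty_of_two_le hY hy
  have hfin2 : ((fun t => d y t) '' ↑(Y.erase y)).Finite := (Finset.finite_toSet _).image _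
  have hne2 := (hT.to_set).image (fun t => d y t)
  obtain ⟨t, ht, h3⟩ := hne2.csInf_mem hfin2
  rw [← h3]
  exact hpos y t (Ne.symm (Finset.ne_of_mem_erase ht))


end aux

section count
open scoped Classical
variable {Λ : Type*} [DecidableEq Λ] {d : Λ → Λ → ℝ}

lemma exp_ineq (x M : ℕ) (hMX : M ≤ x) (k : ℕ) :
    x ^ ((k+2)/2) * M ^ ((k+3)/2) * M ≤ x ^ ((k+3)/2) * M ^ ((k+4)/2) := by
  rcases Nat.even_or_odd k with ⟨t, rfl⟩ | ⟨t, rfl⟩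
  · have e1 : (t+t+2)/2 = t+1 := by omega
    have e2 : (t+t+3)/2 = t+1 := by omega
    have e3 : (t+t+4)/2 = t+2 := by omega
    rw [e1, e2, e3]
    exact le_of_eq (by ring)
  · have e1 : (2*t+1+2)/2 = t+1 := by omega
    have e2 : (2*t+1+3)/2 = t+2 := by omega
    have e3 : (2*t+1+4)/2 = t+2 := by omega
    rw [e1, e2, e3]
    calc x^(t+1) * M^(t+2) * M = (x^(t+1) * M^(t+2)) * M := by ring
      _ ≤ (x^(t+1) * M^(t+2)) * x := Nat.mul_le_mul_left _ hMX
      _ = x^(t+2) * M^(t+2) := by ring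

lemma cnt_card_le (hsym : ∀ x y, d x y = d y x) {X : Finset Λ} {r : ℝ} {M : ℕ}
    (hball : ∀ x ∈ X, (ballX d X r x).card ≤ M) (hMX : M ≤ X.card) (n : ℕ) :
    (cntF d X r (n+1)).card ≤ qseq (n+1) * (X.card ^ ((n+1)/2) * M ^ ((n+2)/2)) := by
  induction n using Nat.strong_induction_on with
  | _ n ih =>
    match n, ih with
    | 0, _ =>
      have h0 : cntF d X r 1 = ∅ := by
        rw [Finset.eq_empty_iff_forall_notMem]
        intro Y hY
        obtain ⟨_, hcard, hgood⟩ := mem_cntF.mp hY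
        obtain ⟨y, rfl⟩ := Finset.card_eq_one.mp hcard
        obtain ⟨z, hz, hzy, _⟩ := hgood y (Finset.mem_singleton_self y)
        exact hzy (Finset.mem_singleton.mp hz)
      simp [h0, qseq]
    | 1, _ =>
      have hsub : cntF d X r 2 ⊆
          X.biUnion (fun a => (ballX d X r a).image (fun b => insert b {a})) := by
        intro Y hY
        obtain ⟨hYX, hcard, hgood⟩ := mem_cntF.mp hY
        obtain ⟨a, b, hab, rfl⟩ := Finset.card_eq_two.mp hcard
        obtain ⟨z, hz, hza, hdz⟩ := hgood a (by simp)
        have hzb : z = b := by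
          rcases Finset.mem_insert.mp hz with h | h
          · exact absurd h hza
          · exact Finset.mem_singleton.mp h
        subst hzb
        refine Finset.mem_biUnion.mpr ⟨a, hYX (by simp), ?_⟩
        refine Finset.mem_image.mpr ⟨z, Finset.mem_filter.mpr ⟨hYX (by simp), hdz⟩, ?_⟩
        ext x; simp [or_comm]
      calc (cntF d X r 2).card
          ≤ _ := Finset.card_le_card hsub
        _ ≤ ∑ a ∈ X, ((ballX d X r a).image (fun b => insert b ({a} : Finset Λ))).card :=
            Finset.card_biUnion_le
        _ ≤ ∑ _a ∈ X, M := Finset.sum_le_sum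
            (fun a ha => (Finset.card_image_le).trans (hball a ha))
        _ = X.card * M := by rw [Finset.sum_const, smul_eq_mul]
        _ ≤ qseq 2 * (X.card ^ (2/2) * M ^ (3/2)) := by norm_num [qseq]
    | (k+2), ih =>
      have IH1 := ih (k+1) (by omega)
      have IH2 := ih k (by omega)
      set A := (cntF d X r (k+2)).biUnion
        (fun Y' => Y'.biUnion (fun a => (ballX d X r a).image (fun y => insert y Y'))) with hA
      set B := (cntF d X r (k+1)).biUnion
        (fun Y'' => X.biUnion (fun y => (ballX d X r y).image
          (fun z => insert z (insert y Y'')))) with hB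
      have hsub : cntF d X r (k+3) ⊆ A ∪ B := fun Y hY => step_mem hsym hY
      have hAcard : A.card ≤ (cntF d X r (k+2)).card * ((k+2) * M) := by
        refine Finset.card_biUnion_le.trans ?_
        have inner : ∀ Y' ∈ cntF d X r (k+2),
            (Y'.biUnion (fun a => (ballX d X r a).image (fun y => insert y Y'))).card
              ≤ (k+2) * M := by
          intro Y' hY'
          obtain ⟨hYX', hcard', _⟩ := mem_cntF.mp hY'
          refine Finset.card_biUnion_le.trans ?_
          calc ∑ a ∈ Y', ((ballX d X r a).image (fun y => insert y Y')).card
              ≤ ∑ _a ∈ Y', M := Finset.sum_le_sum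
                (fun a ha => (Finset.card_image_le).trans (hball a (hYX' ha)))
            _ = (k+2) * M := by rw [Finset.sum_const, smul_eq_mul, hcard']
        calc ∑ Y' ∈ cntF d X r (k+2),
              (Y'.biUnion fun a => (ballX d X r a).image (fun y => insert y Y')).card
            ≤ ∑ _Y' ∈ cntF d X r (k+2), (k+2) * M := Finset.sum_le_sum inner
          _ = (cntF d X r (k+2)).card * ((k+2)*M) := by rw [Finset.sum_const, smul_eq_mul]
      have hBcard : B.card ≤ (cntF d X r (k+1)).card * (X.card * M) := by
        refine Finset.card_biUnion_le.trans ?_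
        have inner : ∀ Y'' ∈ cntF d X r (k+1),
            (X.biUnion (fun y => (ballX d X r y).image
              (fun z => insert z (insert y Y'')))).card ≤ X.card * M := by
          intro Y'' _
          refine Finset.card_biUnion_le.trans ?_
          calc ∑ y ∈ X, ((ballX d X r y).image (fun z => insert z (insert y Y''))).card
              ≤ ∑ _y ∈ X, M := Finset.sum_le_sum
                (fun y hy => (Finset.card_image_le).trans (hball y hy))
            _ = X.card * M := by rw [Finset.sum_const, smul_eq_mul]
        calc ∑ Y'' ∈ cntF d X r (k+1), _ ≤ ∑ _Y'' ∈ cntF d X r (k+1), X.card * M :=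
              Finset.sum_le_sum inner
          _ = (cntF d X r (k+1)).card * (X.card * M) := by rw [Finset.sum_const, smul_eq_mul]
      have e1 : (k+3)/2 = (k+1)/2 + 1 := by omega
      have e2 : (k+4)/2 = (k+2)/2 + 1 := by omega
      calc (cntF d X r (k+3)).card
          ≤ (A ∪ B).card := Finset.card_le_card hsub
        _ ≤ A.card + B.card := Finset.card_union_le _ _
        _ ≤ (cntF d X r (k+2)).card * ((k+2)*M) + (cntF d X r (k+1)).card * (X.card*M) :=
            add_le_add hAcard hBcard
        _ ≤ (qseq (k+2) * (X.card^((k+2)/2) * M^((k+3)/2))) * ((k+2)*M)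
              + (qseq (k+1) * (X.card^((k+1)/2)*M^((k+2)/2))) * (X.card*M) :=
            add_le_add (Nat.mul_le_mul_right _ IH1) (Nat.mul_le_mul_right _ IH2)
        _ ≤ qseq (k+3) * (X.card^((k+3)/2) * M^((k+4)/2)) := by
            rw [qseq_rec]
            have h1 : (qseq (k+2) * (X.card^((k+2)/2) * M^((k+3)/2))) * ((k+2)*M)
                ≤ ((k+2) * qseq (k+2)) * (X.card^((k+3)/2) * M^((k+4)/2)) := by
              calc (qseq (k+2) * (X.card^((k+2)/2) * M^((k+3)/2))) * ((k+2)*M)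
                  = ((k+2) * qseq (k+2)) * (X.card^((k+2)/2) * M^((k+3)/2) * M) := by ring
                _ ≤ ((k+2) * qseq (k+2)) * (X.card^((k+3)/2) * M^((k+4)/2)) :=
                    Nat.mul_le_mul_left _ (exp_ineq _ _ hMX k)
            have h2 : (qseq (k+1) * (X.card^((k+1)/2)*M^((k+2)/2))) * (X.card*M)
                = qseq (k+1) * (X.card^((k+3)/2) * M^((k+4)/2)) := by
              rw [e1, e2]; ring
            calc (qseq (k+2) * (X.card^((k+2)/2) * M^((k+3)/2))) * ((k+2)*M)
                  + (qseq (k+1) * (X.card^((k+1)/2)*M^((k+2)/2))) * (X.card*M)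
                ≤ ((k+2) * qseq (k+2)) * (X.card^((k+3)/2) * M^((k+4)/2))
                  + qseq (k+1) * (X.card^((k+3)/2) * M^((k+4)/2)) := add_le_add h1 h2.le
              _ = ((k+2)*qseq (k+2) + qseq (k+1)) * (X.card^((k+3)/2) * M^((k+4)/2)) := by ring

end count



lemma rpow_half_sq (a : ℝ) (ha : 0 ≤ a) (m : ℕ) : (a ^ ((m:ℝ)/2))^2 = a ^ m := by
  rw [← Real.rpow_natCast (a ^ ((m:ℝ)/2)) 2, ← Real.rpow_mul ha, ← Real.rpow_natCast a m]
  congr 1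
  push_cast
  ring

lemma pow_half_bound (x M Nr m : ℕ) (h1 : M ≤ x) (h2 : M ≤ Nr) :
    ((x ^ (m/2) * M ^ ((m+1)/2) : ℕ) : ℝ) ≤ (x:ℝ)^((m:ℝ)/2) * (Nr:ℝ)^((m:ℝ)/2) := by
  have hnat : (x ^ (m/2) * M ^ ((m+1)/2))^2 ≤ x^m * Nr^m := by
    rcases Nat.even_or_odd m with ⟨t, rfl⟩ | ⟨t, rfl⟩
    · have e1 : (t+t)/2 = t := by omega
      have e2 : (t+t+1)/2 = t := by omega
      rw [e1, e2]
      calc (x^t * M^t)^2 = x^(t+t) * M^(t+t) := by ring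
        _ ≤ x^(t+t) * Nr^(t+t) := Nat.mul_le_mul_left _ (Nat.pow_le_pow_left h2 _)
    · have e1 : (2*t+1)/2 = t := by omega
      have e2 : (2*t+1+1)/2 = t+1 := by omega
      rw [e1, e2]
      calc (x^t * M^(t+1))^2 = (x^(2*t) * M^(2*t+1)) * M := by ring
        _ ≤ (x^(2*t) * Nr^(2*t+1)) * x :=
            Nat.mul_le_mul (Nat.mul_le_mul_left _ (Nat.pow_le_pow_left h2 _)) h1
        _ = x^(2*t+1) * Nr^(2*t+1) := by ring
  set L : ℝ := ((x ^ (m/2) * M ^ ((m+1)/2) : ℕ) : ℝ) with hLdef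
  set R : ℝ := (x:ℝ)^((m:ℝ)/2) * (Nr:ℝ)^((m:ℝ)/2) with hRdef
  have hL : 0 ≤ L := Nat.cast_nonneg _
  have hR : 0 ≤ R := mul_nonneg (Real.rpow_nonneg (Nat.cast_nonneg _) _)
    (Real.rpow_nonneg (Nat.cast_nonneg _) _)
  have hsq : L^2 ≤ R^2 := by
    have hRsq : R^2 = (x:ℝ)^m * (Nr:ℝ)^m := by
      rw [hRdef, mul_pow, rpow_half_sq _ (Nat.cast_nonneg x) m,
        rpow_half_sq _ (Nat.cast_nonneg Nr) m]
    have hLsq : L^2 = (((x ^ (m/2) * M ^ ((m+1)/2))^2 : ℕ) : ℝ) := by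
      rw [hLdef]; push_cast; ring
    rw [hLsq, hRsq]
    calc (((x ^ (m/2) * M ^ ((m+1)/2))^2 : ℕ) : ℝ) ≤ ((x^m * Nr^m : ℕ) : ℝ) :=
          Nat.cast_le.mpr hnat
      _ = (x:ℝ)^m * (Nr:ℝ)^m := by push_cast; ring
  calc L = Real.sqrt (L^2) := (Real.sqrt_sq hL).symm
    _ ≤ Real.sqrt (R^2) := Real.sqrt_le_sqrt hsq
    _ = R := Real.sqrt_sq hR


theorem stmt7 {Λ : Type*} [DecidableEq Λ] (d : Λ → Λ → ℝ)
    (hsym : ∀ x y, d x y = d y x) (hpos : ∀ x y, x ≠ y → 0 < d x y)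
    (X : Finset Λ) (N : ℕ → ℕ)
    (hN : ∀ x ∈ X, ∀ r : ℕ, 1 ≤ r → ({y | y ∈ X ∧ d x y ≤ (r : ℝ)} : Set Λ).ncard ≤ N r)
    (m : ℕ) (hm : 2 ≤ m)
    (hsum : Summable (fun r : ℕ => (N (r + 1) : ℝ) ^ ((m : ℝ) / 2) * Real.exp (-((r : ℝ) + 1)))) :
    ∑ Y ∈ X.powerset.filter (fun Y => Y.card = m), Real.exp (-(spread d Y)) ≤
      Real.exp 1 * (qseq m : ℝ) * (X.card : ℝ) ^ ((m : ℝ) / 2) *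
        ∑' r : ℕ, (N (r + 1) : ℝ) ^ ((m : ℝ) / 2) * Real.exp (-((r : ℝ) + 1)) := by
  
  classical
  obtain ⟨m', rfl⟩ : ∃ m', m = m' + 1 := ⟨m - 1, by omega⟩
  set m := m' + 1 with hmdef
  set S := X.powerset.filter (fun Y => Y.card = m) with hS
  have hSfact : ∀ Y ∈ S, Y ⊆ X ∧ Y.card = m := by
    intro Y hY
    have := Finset.mem_filter.mp hY
    exact ⟨Finset.mem_powerset.mp this.1, this.2⟩
  set k : Finset Λ → ℕ := fun Y => ⌈spread d Y⌉₊ with hk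
  have hkfact : ∀ Y ∈ S, 1 ≤ k Y ∧ good d (k Y : ℝ) Y := by
    intro Y hY
    obtain ⟨hYX, hcard⟩ := hSfact Y hY
    have h2 : 2 ≤ Y.card := by omega
    have hsp := spread_pos h2 hpos
    exact ⟨Nat.ceil_pos.mpr hsp, (spread_le_iff h2).mp (Nat.le_ceil _)⟩
  have hexp : ∀ Y ∈ S, Real.exp (-(spread d Y)) ≤ Real.exp 1 * Real.exp (-(k Y : ℝ)) := by
    intro Y hY
    obtain ⟨hYX, hcard⟩ := hSfact Y hY
    have h2 : 2 ≤ Y.card := by omega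
    have hsp := spread_pos h2 hpos
    rw [← Real.exp_add]
    apply Real.exp_le_exp.mpr
    have hceil : (k Y : ℝ) < spread d Y + 1 := Nat.ceil_lt_add_one hsp.le
    linarith
  set I := S.image k with hI
  -- per-fiber cardinality bound
  have hfibcard : ∀ r ∈ I, ((S.filter (fun Y => k Y = r)).card : ℝ)
      ≤ (qseq m : ℝ) * ((X.card : ℝ) ^ ((m:ℝ)/2) * (N r : ℝ) ^ ((m:ℝ)/2)) := by
    intro r hr
    have hr1 : 1 ≤ r := by
      obtain ⟨Y, hY, rfl⟩ := Finset.mem_image.mp hr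
      exact (hkfact Y hY).1
    set M := min (N r) X.card with hM
    have hball : ∀ x ∈ X, (ballX d X (r:ℝ) x).card ≤ M := by
      intro x hx
      apply le_min
      · have hset : ({y | y ∈ X ∧ d x y ≤ (r:ℝ)} : Set Λ)
            = ↑(X.filter (fun y => d x y ≤ (r:ℝ))) := by
          ext y; simp
        have := hN x hx r hr1
        rw [hset, Set.ncard_coe_finset] at this
        calc (ballX d X (r:ℝ) x).card = (X.filter (fun y => d x y ≤ (r:ℝ))).card := by
              simp [ballX]
          _ ≤ N r := this
      · exact (Finset.card_le_card (Finset.filter_subset _ _))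
    have hcnt := cnt_card_le hsym hball (min_le_right _ _) m'
    have hsubfib : S.filter (fun Y => k Y = r) ⊆ cntF d X (r:ℝ) m := by
      intro Y hY
      obtain ⟨hYS, hkY⟩ := Finset.mem_filter.mp hY
      obtain ⟨hYX, hcard⟩ := hSfact Y hYS
      have hgood := (hkfact Y hYS).2
      rw [hkY] at hgood
      exact mem_cntF.mpr ⟨hYX, hcard, hgood⟩
    calc ((S.filter (fun Y => k Y = r)).card : ℝ)
        ≤ ((cntF d X (r:ℝ) m).card : ℝ) := Nat.cast_le.mpr (Finset.card_le_card hsubfib)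
      _ ≤ ((qseq m * (X.card ^ (m/2) * M ^ ((m+1)/2)) : ℕ) : ℝ) := by
          exact_mod_cast hcnt
      _ = (qseq m : ℝ) * ((X.card ^ (m/2) * M ^ ((m+1)/2) : ℕ) : ℝ) := by push_cast; ring
      _ ≤ (qseq m : ℝ) * ((X.card : ℝ) ^ ((m:ℝ)/2) * (N r : ℝ) ^ ((m:ℝ)/2)) := by
          apply mul_le_mul_of_nonneg_left _ (Nat.cast_nonneg _)
          exact pow_half_bound X.card M (N r) m (min_le_right _ _) (min_le_left _ _)
  -- fiberwise decomposition
  have hfib := Finset.sum_fiberwise_of_maps_to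
    (fun Y hY => Finset.mem_image_of_mem k hY : ∀ Y ∈ S, k Y ∈ I)
    (fun Y => Real.exp 1 * Real.exp (-(k Y : ℝ)))
  have step1 : ∑ Y ∈ S, Real.exp (-(spread d Y))
      ≤ ∑ r ∈ I, ((S.filter (fun Y => k Y = r)).card : ℝ)
          * (Real.exp 1 * Real.exp (-(r:ℝ))) := by
    calc ∑ Y ∈ S, Real.exp (-(spread d Y))
        ≤ ∑ Y ∈ S, Real.exp 1 * Real.exp (-(k Y : ℝ)) := Finset.sum_le_sum hexp
      _ = ∑ r ∈ I, ∑ Y ∈ S.filter (fun Y => k Y = r),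
            Real.exp 1 * Real.exp (-(k Y : ℝ)) := hfib.symm
      _ = ∑ r ∈ I, ((S.filter (fun Y => k Y = r)).card : ℝ)
            * (Real.exp 1 * Real.exp (-(r:ℝ))) := by
          refine Finset.sum_congr rfl (fun r hr => ?_)
          rw [Finset.sum_congr rfl (fun Y hY => by
            rw [(Finset.mem_filter.mp hY).2] :
              ∀ Y ∈ S.filter (fun Y => k Y = r),
                Real.exp 1 * Real.exp (-(k Y : ℝ)) = Real.exp 1 * Real.exp (-(r:ℝ))),
            Finset.sum_const, nsmul_eq_mul]
  -- bound each fiber term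
  have step2 : ∑ r ∈ I, ((S.filter (fun Y => k Y = r)).card : ℝ)
        * (Real.exp 1 * Real.exp (-(r:ℝ)))
      ≤ ∑ r ∈ I, Real.exp 1 * (qseq m : ℝ) * (X.card : ℝ) ^ ((m:ℝ)/2)
          * ((N r : ℝ) ^ ((m:ℝ)/2) * Real.exp (-(r:ℝ))) := by
    refine Finset.sum_le_sum (fun r hr => ?_)
    have h1 := hfibcard r hr
    have h2 : (0:ℝ) ≤ Real.exp 1 * Real.exp (-(r:ℝ)) :=
      mul_nonneg (Real.exp_nonneg _) (Real.exp_nonneg _)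
    calc ((S.filter (fun Y => k Y = r)).card : ℝ) * (Real.exp 1 * Real.exp (-(r:ℝ)))
        ≤ ((qseq m : ℝ) * ((X.card : ℝ) ^ ((m:ℝ)/2) * (N r : ℝ) ^ ((m:ℝ)/2)))
            * (Real.exp 1 * Real.exp (-(r:ℝ))) := mul_le_mul_of_nonneg_right h1 h2
      _ = Real.exp 1 * (qseq m : ℝ) * (X.card : ℝ) ^ ((m:ℝ)/2)
            * ((N r : ℝ) ^ ((m:ℝ)/2) * Real.exp (-(r:ℝ))) := by ring
  -- reindex and compare with the tsum
  have hr1 : ∀ r ∈ I, 1 ≤ r := by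
    intro r hr
    obtain ⟨Y, hY, rfl⟩ := Finset.mem_image.mp hr
    exact (hkfact Y hY).1
  have hreidx : ∑ r ∈ I, (N r : ℝ) ^ ((m:ℝ)/2) * Real.exp (-(r:ℝ))
      ≤ ∑' r : ℕ, (N (r + 1) : ℝ) ^ ((m : ℝ) / 2) * Real.exp (-((r : ℝ) + 1)) := by
    have hinj : ∀ x ∈ I, ∀ y ∈ I, x - 1 = y - 1 → x = y := by
      intro x hx y hy h
      have := hr1 x hx; have := hr1 y hy; omega
    have himg : ∑ s ∈ I.image (fun r => r - 1),
        (N (s + 1) : ℝ) ^ ((m : ℝ) / 2) * Real.exp (-((s : ℝ) + 1))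
        = ∑ r ∈ I, (N r : ℝ) ^ ((m:ℝ)/2) * Real.exp (-(r:ℝ)) := by
      rw [Finset.sum_image hinj]
      refine Finset.sum_congr rfl (fun r hr => ?_)
      have h1 := hr1 r hr
      have e1 : r - 1 + 1 = r := by omega
      have e2 : ((r - 1 : ℕ) : ℝ) + 1 = (r : ℝ) := by
        rw [Nat.cast_sub h1]; push_cast; ring
      rw [e1, e2]
    rw [← himg]
    exact Summable.sum_le_tsum _ (fun s _ => mul_nonneg (Real.rpow_nonneg (Nat.cast_nonneg _) _)
      (Real.exp_nonneg _)) hsum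
  have hconst : (0:ℝ) ≤ Real.exp 1 * (qseq m : ℝ) * (X.card : ℝ) ^ ((m:ℝ)/2) :=
    mul_nonneg (mul_nonneg (Real.exp_nonneg _) (Nat.cast_nonneg _))
      (Real.rpow_nonneg (Nat.cast_nonneg _) _)
  calc ∑ Y ∈ S, Real.exp (-(spread d Y))
      ≤ ∑ r ∈ I, ((S.filter (fun Y => k Y = r)).card : ℝ)
          * (Real.exp 1 * Real.exp (-(r:ℝ))) := step1
    _ ≤ ∑ r ∈ I, Real.exp 1 * (qseq m : ℝ) * (X.card : ℝ) ^ ((m:ℝ)/2)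
          * ((N r : ℝ) ^ ((m:ℝ)/2) * Real.exp (-(r:ℝ))) := step2
    _ = Real.exp 1 * (qseq m : ℝ) * (X.card : ℝ) ^ ((m:ℝ)/2)
          * ∑ r ∈ I, (N r : ℝ) ^ ((m:ℝ)/2) * Real.exp (-(r:ℝ)) := by
        rw [← Finset.mul_sum]
    _ ≤ Real.exp 1 * (qseq m : ℝ) * (X.card : ℝ) ^ ((m:ℝ)/2)
          * ∑' r : ℕ, (N (r + 1) : ℝ) ^ ((m : ℝ) / 2) * Real.exp (-((r : ℝ) + 1)) :=
        mul_le_mul_of_nonneg_left hreidx hconst
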